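/- Let L ≥ 1 and let y_1 ∈ ℂ^{L+1} be the vector with y_1[0] = 1, y_1[L] = 2, and y_1[n] = 0 for 0 < n < L. If y' ∈ ℂ^{L+1} satisfies |Σ_{n=0}^{L} y'[n]·η^n|² = |1 + 2η^L|² for every η ∈ S¹, then either y' has at least 3 nonzero entries, or y' = e^{iθ}·y_1 for some real θ, or y' = e^{iθ}·ỹ_1 for some real θ, where ỹ_1 is the vector with ỹ_1[0] = 2, ỹ_1[L] = 1, and ỹ_1[n] = 0 for 0 < n < L. -/

import Mathlib

open Complex BigOperators

/-- any vector `y' ∈ ℂ^{L+1}` whose Fourier intensity on the unit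
circle agrees with that of `1 + 2η^L` either has at least 3 nonzero entries, or
is a global phase multiple of `y₁ = (1,0,…,0,2)` or of its conjugate reflection
`ỹ₁ = (2,0,…,0,1)`. -/
theorem two_spike_rigidity (L : ℕ) (hL : 1 ≤ L)
    (y₁ ty₁ : Fin (L + 1) → ℂ)
    (hy₁ : ∀ n : Fin (L + 1),
      y₁ n = if (n : ℕ) = 0 then 1 else if (n : ℕ) = L then 2 else 0)
    (hty₁ : ∀ n : Fin (L + 1),
      ty₁ n = if (n : ℕ) = 0 then 2 else if (n : ℕ) = L then 1 else 0)
    (y' : Fin (L + 1) → ℂ)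
    (h : ∀ η : ℂ, ‖η‖ = 1 →
      ‖∑ n : Fin (L + 1), y' n * η ^ (n : ℕ)‖ ^ 2 =
      ‖1 + 2 * η ^ L‖ ^ 2) :
    3 ≤ Set.ncard {n : Fin (L + 1) | y' n ≠ 0} ∨
    (∃ θ : ℝ, ∀ n, y' n = Complex.exp (θ * Complex.I) * y₁ n) ∨
    (∃ θ : ℝ, ∀ n, y' n = Complex.exp (θ * Complex.I) * ty₁ n) := by
  classical
  by_cases hcard : 3 ≤ Set.ncard {n : Fin (L + 1) | y' n ≠ 0}
  · exact Or.inl hcard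
  right
  set l : Fin (L + 1) := ⟨L, Nat.lt_succ_self L⟩ with hldef
  have hlval : (l : ℕ) = L := rfl
  have h0val : ((0 : Fin (L + 1)) : ℕ) = 0 := rfl
  -- values of y₁ and ty₁
  have hy10 : y₁ 0 = 1 := by rw [hy₁ 0, h0val, if_pos rfl]
  have hy1l : y₁ l = 2 := by rw [hy₁ l, hlval, if_neg (by omega), if_pos rfl]
  have hty10 : ty₁ 0 = 2 := by rw [hty₁ 0, h0val, if_pos rfl]
  have hty1l : ty₁ l = 1 := by rw [hty₁ l, hlval, if_neg (by omega), if_pos rfl]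
  have hval0 : ∀ n : Fin (L + 1), n ≠ 0 → (n : ℕ) ≠ 0 :=
    fun n hn hc => hn (Fin.ext (by rw [hc, h0val]))
  have hvalL : ∀ n : Fin (L + 1), n ≠ l → (n : ℕ) ≠ L :=
    fun n hn hc => hn (Fin.ext (by rw [hc, hlval]))
  have hy1z : ∀ n : Fin (L + 1), n ≠ 0 → n ≠ l → y₁ n = 0 := by
    intro n hn0 hnl
    rw [hy₁ n, if_neg (hval0 n hn0), if_neg (hvalL n hnl)]
  have hty1z : ∀ n : Fin (L + 1), n ≠ 0 → n ≠ l → ty₁ n = 0 := by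
    intro n hn0 hnl
    rw [hty₁ n, if_neg (hval0 n hn0), if_neg (hvalL n hnl)]
  set P : Polynomial ℂ :=
    ∑ n : Fin (L + 1), Polynomial.C (y' n) * Polynomial.X ^ (n : ℕ) with hP
  set Q : Polynomial ℂ :=
    ∑ n : Fin (L + 1), Polynomial.C ((starRingEnd ℂ) (y' n)) *
      Polynomial.X ^ (L - (n : ℕ)) with hQ
  set R : Polynomial ℂ :=
    Polynomial.C 2 + Polynomial.C 5 * Polynomial.X ^ L +
      Polynomial.C 2 * Polynomial.X ^ (2 * L) with hR
  -- the polynomial identity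
  have hPQ : P * Q = R := by
    have hsub : {η : ℂ | ‖η‖ = 1} ⊆ {x | (P * Q - R).IsRoot x} := by
      intro η hη
      simp only [Set.mem_setOf_eq] at hη ⊢
      have hη0 : η ≠ 0 := by
        intro h0; rw [h0] at hη; simp at hη
      have hinv : η⁻¹ = (starRingEnd ℂ) η := inv_eq_conj (by rw [hη])
      have hevalP : Polynomial.eval η P = ∑ n : Fin (L + 1), y' n * η ^ (n : ℕ) := by
        simp [hP, Polynomial.eval_finset_sum]
      have hevalQ : Polynomial.eval η Q =
          η ^ L * (starRingEnd ℂ) (∑ n : Fin (L + 1), y' n * η ^ (n : ℕ)) := by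
        simp only [hQ, Polynomial.eval_finset_sum, Polynomial.eval_mul,
          Polynomial.eval_C, Polynomial.eval_pow, Polynomial.eval_X, map_sum, map_mul,
          map_pow]
        rw [Finset.mul_sum]
        refine Finset.sum_congr rfl fun n _ => ?_
        rw [← hinv, pow_sub₀ η hη0 (Nat.le_of_lt_succ n.2), inv_pow]
        ring
      have hS := h η hη
      rw [Complex.sq_norm, Complex.sq_norm] at hS
      have hSc : ((Complex.normSq (∑ n : Fin (L + 1), y' n * η ^ (n : ℕ)) : ℂ)) =
          ((Complex.normSq (1 + 2 * η ^ L) : ℂ)) :=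
        congrArg (fun t : ℝ => (t : ℂ)) hS
      have key : Polynomial.eval η (P * Q) = Polynomial.eval η R := by
        rw [Polynomial.eval_mul, hevalP, hevalQ]
        have step : (∑ n : Fin (L + 1), y' n * η ^ (n : ℕ)) *
            (η ^ L * (starRingEnd ℂ) (∑ n : Fin (L + 1), y' n * η ^ (n : ℕ))) =
            η ^ L * ((Complex.normSq (∑ n : Fin (L + 1), y' n * η ^ (n : ℕ)) : ℂ)) := by
          rw [← Complex.mul_conj]; ring
        rw [step, hSc, ← Complex.mul_conj]
        have hconj : (starRingEnd ℂ) (1 + 2 * η ^ L) = 1 + 2 * (η⁻¹) ^ L := by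
          rw [map_add, map_mul, map_pow, ← hinv, map_one, map_ofNat]
        rw [hconj]
        have hRval : Polynomial.eval η R = 2 + 5 * η ^ L + 2 * (η ^ L) ^ 2 := by
          simp only [hR, Polynomial.eval_add, Polynomial.eval_mul, Polynomial.eval_C,
            Polynomial.eval_pow, Polynomial.eval_X]
          rw [pow_mul']
        rw [hRval]
        have hL0 : η ^ L ≠ 0 := pow_ne_zero _ hη0
        have hinvL : η ^ L * (η⁻¹) ^ L = 1 := by rw [← mul_pow, mul_inv_cancel₀ hη0, one_pow]
        linear_combination (2 + 4 * η ^ L) * hinvL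
      simpa [Polynomial.IsRoot, Polynomial.eval_sub, sub_eq_zero] using key
    have hinf : ({η : ℂ | ‖η‖ = 1}).Infinite := by
      have hio : (Set.Ioo (0 : ℝ) 1).Infinite := Set.Ioo_infinite (by norm_num)
      have hinj : Set.InjOn (fun t : ℝ => Complex.exp (t * Complex.I)) (Set.Ioo 0 1) := by
        intro s hs t ht hst
        simp only at hst
        have h1 : Complex.exp ((s : ℂ) * Complex.I - (t : ℂ) * Complex.I) = 1 := by
          rw [Complex.exp_sub, hst, div_self (Complex.exp_ne_zero _)]
        rw [Complex.exp_eq_one_iff] at h1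
        obtain ⟨n, hn⟩ := h1
        have h2 : ((s - t : ℝ) : ℂ) = ((n * (2 * Real.pi) : ℝ) : ℂ) := by
          have hI : ((s : ℂ) - t) * Complex.I = ((n : ℂ) * (2 * Real.pi)) * Complex.I := by
            rw [show ((s : ℂ) - t) * Complex.I = (s : ℂ) * Complex.I - (t : ℂ) * Complex.I
              from by ring, hn]
            ring
          have := mul_right_cancel₀ Complex.I_ne_zero hI
          push_cast at this ⊢
          exact this
        have hst' : s - t = n * (2 * Real.pi) := by exact_mod_cast h2
        have hpi : (2 : ℝ) * Real.pi > 6 := by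
          have := Real.pi_gt_three
          linarith
        obtain ⟨hs1, hs2⟩ := hs
        obtain ⟨ht1, ht2⟩ := ht
        have hn0 : n = 0 := by
          rcases lt_trichotomy n 0 with hlt | heq | hgt
          · exfalso
            have hn1 : n ≤ -1 := by omega
            have : (n : ℝ) ≤ -1 := by exact_mod_cast hn1
            nlinarith
          · exact heq
          · exfalso
            have : (1 : ℝ) ≤ (n : ℝ) := by exact_mod_cast hgt
            nlinarith
        rw [hn0] at hst'
        simp at hst'
        linarith
      have himg : ((fun t : ℝ => Complex.exp (t * Complex.I)) '' (Set.Ioo 0 1)).Infinite :=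
        hio.image hinj
      refine himg.mono ?_
      rintro _ ⟨t, _, rfl⟩
      simp [Complex.norm_exp]
    have h0 : P * Q - R = 0 :=
      Polynomial.eq_zero_of_infinite_isRoot _ (hinf.mono hsub)
    exact sub_eq_zero.mp h0
  -- expand the product
  have hPQ2 : P * Q = ∑ n : Fin (L + 1), ∑ m : Fin (L + 1),
      Polynomial.C (y' n * (starRingEnd ℂ) (y' m)) *
        Polynomial.X ^ ((n : ℕ) + (L - (m : ℕ))) := by
    rw [hP, hQ, Finset.sum_mul_sum]
    refine Finset.sum_congr rfl fun n _ => Finset.sum_congr rfl fun m _ => ?_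
    rw [map_mul, pow_add]
    ring
  -- coefficient extraction helper
  have hcoeff : ∀ k : ℕ, (P * Q).coeff k = ∑ n : Fin (L + 1), ∑ m : Fin (L + 1),
      (if k = (n : ℕ) + (L - (m : ℕ)) then y' n * (starRingEnd ℂ) (y' m) else 0) := by
    intro k
    rw [hPQ2, Polynomial.finset_sum_coeff]
    refine Finset.sum_congr rfl fun n _ => ?_
    rw [Polynomial.finset_sum_coeff]
    refine Finset.sum_congr rfl fun m _ => ?_
    rw [Polynomial.coeff_C_mul, Polynomial.coeff_X_pow]
    simp [mul_ite]
  -- coefficient at 2L : y'_L * conj y'_0 = 2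
  have c2 : y' l * (starRingEnd ℂ) (y' 0) = 2 := by
    have hco := hcoeff (2 * L)
    rw [hPQ] at hco
    have hRco : R.coeff (2 * L) = 2 := by
      have h1 : ¬(2 * L = 0) := by omega
      have h2 : ¬(2 * L = L) := by omega
      rw [hR]
      simp [Polynomial.coeff_X_pow, Polynomial.coeff_C, h1, h2]
    rw [hRco] at hco
    rw [Finset.sum_eq_single l ?_ (by simp)] at hco
    · rw [Finset.sum_eq_single (0 : Fin (L + 1)) ?_ (by simp)] at hco
      · rw [if_pos (by rw [hlval, h0val]; omega)] at hco
        exact hco.symm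
      · intro m _ hm
        rw [if_neg]
        have hm' := hval0 m hm
        have := m.2
        rw [hlval]
        omega
    · intro n _ hn
      apply Finset.sum_eq_zero
      intro m _
      rw [if_neg]
      have hn' := hvalL n hn
      have := n.2
      have := m.2
      omega
  -- coefficient at L : sum of |y'_n|^2 = 5
  have c5 : ∑ n : Fin (L + 1), y' n * (starRingEnd ℂ) (y' n) = 5 := by
    have hco := hcoeff L
    rw [hPQ] at hco
    have hRco : R.coeff L = 5 := by
      have h1 : ¬(L = 0) := by omega
      have h2 : ¬(L = 2 * L) := by omega
      rw [hR]
      simp [Polynomial.coeff_X_pow, Polynomial.coeff_C, h1, h2]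
    rw [hRco] at hco
    rw [hco]
    refine Finset.sum_congr rfl fun n _ => ?_
    rw [Finset.sum_eq_single n ?_ (by simp)]
    · rw [if_pos (by have := n.2; omega)]
    · intro m _ hm
      rw [if_neg]
      have hm' : (m : ℕ) ≠ (n : ℕ) := fun hc => hm (Fin.ext hc)
      have := m.2
      have := n.2
      omega
  -- basic consequences
  have h0l : (0 : Fin (L + 1)) ≠ l := by
    intro hc
    have : ((0 : Fin (L + 1)) : ℕ) = (l : ℕ) := congrArg Fin.val hc
    rw [h0val, hlval] at this
    omega
  have ha : y' 0 ≠ 0 := by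
    intro hc; rw [hc] at c2; simp at c2
  have hb : y' l ≠ 0 := by
    intro hc; rw [hc] at c2; simp at c2
  -- the support is exactly {0, l}
  have hsupp : {n : Fin (L + 1) | y' n ≠ 0} = {0, l} := by
    have hsub2 : ({0, l} : Set (Fin (L + 1))) ⊆ {n : Fin (L + 1) | y' n ≠ 0} := by
      rintro n (rfl | rfl)
      · exact ha
      · exact hb
    have hc2 : ({0, l} : Set (Fin (L + 1))).ncard = 2 := Set.ncard_pair h0l
    exact (Set.eq_of_subset_of_ncard_le hsub2 (by omega) (Set.toFinite _)).symm
  have hz : ∀ n : Fin (L + 1), n ≠ 0 → n ≠ l → y' n = 0 := by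
    intro n hn0 hnl
    by_contra hc
    have : n ∈ ({0, l} : Set (Fin (L + 1))) := hsupp ▸ hc
    rcases this with h' | h'
    · exact hn0 h'
    · exact hnl h'
  -- reduce the sum
  have c5' : y' 0 * (starRingEnd ℂ) (y' 0) + y' l * (starRingEnd ℂ) (y' l) = 5 := by
    have hred : ∑ n : Fin (L + 1), y' n * (starRingEnd ℂ) (y' n) =
        ∑ n ∈ ({0, l} : Finset (Fin (L + 1))), y' n * (starRingEnd ℂ) (y' n) := by
      symm
      apply Finset.sum_subset (Finset.subset_univ _)
      intro n _ hn
      have hn0 : n ≠ 0 := by intro hc; exact hn (by simp [hc])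
      have hnl : n ≠ l := by intro hc; exact hn (by simp [hc])
      rw [hz n hn0 hnl]
      simp
    rw [hred, Finset.sum_pair h0l] at c5
    exact c5
  have e1 : y' l * (starRingEnd ℂ) (y' 0) = 2 := c2
  have e2 : Complex.normSq (y' 0) + Complex.normSq (y' l) = 5 := by
    have hc : ((Complex.normSq (y' 0) + Complex.normSq (y' l) : ℝ) : ℂ) = 5 := by
      push_cast
      rw [← Complex.mul_conj, ← Complex.mul_conj]
      exact c5'
    exact_mod_cast hc
  have e3 : Complex.normSq (y' 0) * Complex.normSq (y' l) = 4 := by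
    have h2 : Complex.normSq (y' l * (starRingEnd ℂ) (y' 0)) = Complex.normSq 2 := by
      rw [e1]
    rw [map_mul, Complex.normSq_conj] at h2
    have h4 : Complex.normSq 2 = 4 := by norm_num [Complex.normSq_apply]
    rw [h4] at h2
    linear_combination h2
  set p := Complex.normSq (y' 0) with hp
  set q := Complex.normSq (y' l) with hq
  have hfac : (p - 1) * (p - 4) = 0 := by linear_combination p * e2 - e3
  rcases mul_eq_zero.mp hfac with hp1 | hp4
  · -- |y'_0| = 1 : global phase of y₁
    left
    have hp1' : p = 1 := by linarith
    have habs : ‖y' 0‖ = 1 := by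
      have h1 : ‖y' 0‖ ^ 2 = 1 := by rw [Complex.sq_norm, ← hp, hp1']
      refine le_antisymm ?_ ?_ <;> nlinarith [norm_nonneg (y' 0), h1]
    refine ⟨Complex.arg (y' 0), fun n => ?_⟩
    have hexp : Complex.exp ((Complex.arg (y' 0) : ℂ) * Complex.I) = y' 0 := by
      have := Complex.norm_mul_exp_arg_mul_I (y' 0)
      rwa [habs, Complex.ofReal_one, one_mul] at this
    have hbval : y' l = 2 * y' 0 := by
      have hu : (starRingEnd ℂ) (y' 0) * y' 0 = 1 := by
        rw [mul_comm, Complex.mul_conj, ← hp, hp1']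
        norm_num
      calc y' l = y' l * ((starRingEnd ℂ) (y' 0) * y' 0) := by rw [hu]; ring
        _ = (y' l * (starRingEnd ℂ) (y' 0)) * y' 0 := by ring
        _ = 2 * y' 0 := by rw [e1]
    rcases eq_or_ne n 0 with rfl | hn0
    · rw [hy10, mul_one]; exact hexp.symm
    · rcases eq_or_ne n l with rfl | hnl
      · rw [hy1l, hbval, hexp]; ring
      · rw [hy1z n hn0 hnl, hz n hn0 hnl, mul_zero]
  · -- |y'_0| = 2 : global phase of ty₁
    right
    have hp4' : p = 4 := by linarith
    have hq1 : q = 1 := by linarith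
    have habs : ‖y' l‖ = 1 := by
      have h1 : ‖y' l‖ ^ 2 = 1 := by rw [Complex.sq_norm, ← hq, hq1]
      refine le_antisymm ?_ ?_ <;> nlinarith [norm_nonneg (y' l), h1]
    refine ⟨Complex.arg (y' l), fun n => ?_⟩
    have hexp : Complex.exp ((Complex.arg (y' l) : ℂ) * Complex.I) = y' l := by
      have := Complex.norm_mul_exp_arg_mul_I (y' l)
      rwa [habs, Complex.ofReal_one, one_mul] at this
    have haval : y' 0 = 2 * y' l := by
      have hu : (starRingEnd ℂ) (y' 0) * y' 0 = 4 := by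
        rw [mul_comm, Complex.mul_conj, ← hp, hp4']
        norm_num
      have h5 : y' l * ((starRingEnd ℂ) (y' 0) * y' 0) = 2 * y' 0 := by
        rw [show y' l * ((starRingEnd ℂ) (y' 0) * y' 0) =
          (y' l * (starRingEnd ℂ) (y' 0)) * y' 0 from by ring, e1]
      rw [hu] at h5
      linear_combination (-1/2 : ℂ) * h5
    rcases eq_or_ne n 0 with rfl | hn0
    · rw [hty10, haval, hexp]; ring
    · rcases eq_or_ne n l with rfl | hnl
      · rw [hty1l, mul_one]; exact hexp.symm
      · rw [hty1z n hn0 hnl, hz n hn0 hnl, mul_zero]
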